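/- Let (L,ρ) be an (R,A)-Lie algebra acting on B extending its action on A via σ, and suppose f₁,…,f_r ∈ B satisfy L·f_i ⊆ A for each i, and that there exist x₁,…,x_r ∈ L with x_i·f_j = δ_{ij}. Then L decomposes as a direct sum of A-modules: L = (⊕_{i=1}^r A x_i) ⊕ C_L({f₁,…,f_r}), where C_L(F) = {y ∈ L : y·f = 0 for all f ∈ F}. In particular, if L is projective as an A-module, so is C_L({f₁,…,f_r}). -/

import Mathlib

/-- A Lie–Rinehart algebra (an `(R,A)`-Lie algebra). -/
structure LieRinehart (R A L : Type*) [CommRing R] [CommRing A] [Algebra R A]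
    [LieRing L] [LieAlgebra R L] [Module A L] where
  ρ : L →ₗ[A] Derivation R A A
  ρ_lie : ∀ x y : L, ρ ⁅x, y⁆ = ⁅ρ x, ρ y⁆
  leibniz : ∀ (a : A) (x y : L), ⁅x, a • y⁆ = a • ⁅x, y⁆ + (ρ x a) • y


/-- in the setting of a Lie–Rinehart algebra `(L,ρ)` acting on `B`
(extending its action on `A` via an injective `φ : A → B` and `σ : L → Der_R(B)`),
if `f₁,…,f_r ∈ B` satisfy `L·f_i ⊆ A` and there are `x₁,…,x_r ∈ L` with
`x_i·f_j = δ_{ij}`, then `L = (⊕_{i} A x_i) ⊕ C_L({f₁,…,f_r})`; in particular if `L`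
is projective as an `A`-module, so is the centraliser. -/
theorem centraliser_direct_sum {R A B L : Type*} [CommRing R] [CommRing A]
    [Algebra R A] [CommRing B] [Algebra R B]
    [LieRing L] [LieAlgebra R L] [Module A L]
    (LR : LieRinehart R A L)
    (φ : A →ₐ[R] B) (hφ : Function.Injective φ)
    (σ : L → B → B)
    (hadd : ∀ (x : L) (b c : B), σ x (b + c) = σ x b + σ x c)
    (hmul : ∀ (x : L) (b c : B), σ x (b * c) = b * σ x c + σ x b * c)
    (hR : ∀ (x : L) (r : R), σ x (algebraMap R B r) = 0)
    (haddx : ∀ (x y : L) (b : B), σ (x + y) b = σ x b + σ y b)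
    (hA : ∀ (a : A) (x : L) (b : B), σ (a • x) b = φ a * σ x b)
    (hlie : ∀ (x y : L) (b : B), σ ⁅x, y⁆ b = σ x (σ y b) - σ y (σ x b))
    (hcompat : ∀ (x : L) (a : A), σ x (φ a) = φ (LR.ρ x a))
    {r : ℕ} (f : Fin r → B) (x : Fin r → L)
    (hfA : ∀ (i : Fin r) (y : L), σ y (f i) ∈ Set.range φ)
    (hδ : ∀ i j : Fin r, σ (x i) (f j) = if i = j then 1 else 0) :
    ∃ C : Submodule A L,
      (∀ y : L, y ∈ C ↔ ∀ i : Fin r, σ y (f i) = 0) ∧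
      -- the sum `(⊕_i A x_i) + C` is all of `L` ...
      (∀ u : L, ∃ (a : Fin r → A) (c : L), c ∈ C ∧ u = (∑ i, a i • x i) + c) ∧
      -- ... and the sum is direct:
      (∀ (a : Fin r → A) (c : L), c ∈ C → (∑ i, a i • x i) + c = 0 →
        (∀ i, a i = 0) ∧ c = 0) ∧
      -- if `L` is projective over `A`, so is `C`:
      (Module.Projective A L → Module.Projective A C) := by
  classical
  -- basic facts about σ
  have hzero : ∀ b : B, σ 0 b = 0 := by
    intro b
    have h := hA 0 0 b
    simpa using h
  have hsub : ∀ (y z : L) (b : B), σ (y - z) b = σ y b - σ z b := by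
    intro y z b
    have h1 : y - z = y + (-1 : A) • z := by
      rw [neg_one_smul]; abel
    rw [h1, haddx, hA]
    simp [sub_eq_add_neg]
  have hsum : ∀ (s : Finset (Fin r)) (v : Fin r → L) (b : B),
      σ (∑ i ∈ s, v i) b = ∑ i ∈ s, σ (v i) b := by
    intro s v b
    induction s using Finset.induction with
    | empty => simpa using hzero b
    | @insert a s hnot ih =>
      rw [Finset.sum_insert hnot, Finset.sum_insert hnot, haddx, ih]
  -- the centraliser
  refine ⟨{ carrier := {y | ∀ i, σ y (f i) = 0}
            add_mem' := ?_
            zero_mem' := ?_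
            smul_mem' := ?_ }, ?_, ?_, ?_, ?_⟩
  · intro y z hy hz i
    rw [haddx, hy i, hz i, add_zero]
  · intro i; exact hzero _
  · intro a y hy i
    rw [hA, hy i, mul_zero]
  · intro y; rfl
  -- coefficients
  all_goals
    have hg : ∀ (i : Fin r) (u : L), φ ((hfA i u).choose) = σ u (f i) :=
      fun i u => (hfA i u).choose_spec
  · -- decomposition
    intro u
    set g : Fin r → A := fun i => (hfA i u).choose with hgdef
    refine ⟨g, u - ∑ i, g i • x i, ?_, by abel⟩
    intro j
    rw [hsub, hsum]
    have : ∀ i, σ (g i • x i) (f j) = if i = j then φ (g i) else 0 := by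
      intro i
      rw [hA, hδ]
      split <;> simp
    rw [Finset.sum_congr rfl fun i _ => this i, Finset.sum_ite_eq' Finset.univ j]
    simp [hg j u, hgdef]
  · -- directness
    intro a c hc heq
    have ha : ∀ j, a j = 0 := by
      intro j
      have h1 : σ ((∑ i, a i • x i) + c) (f j) = 0 := by rw [heq]; exact hzero _
      rw [haddx, hsum, hc j, add_zero] at h1
      have : ∀ i, σ (a i • x i) (f j) = if i = j then φ (a i) else 0 := by
        intro i
        rw [hA, hδ]
        split <;> simp
      rw [Finset.sum_congr rfl fun i _ => this i,
        Finset.sum_ite_eq' Finset.univ j] at h1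
      simp only [Finset.mem_univ, if_true] at h1
      exact hφ (by simpa using h1)
    refine ⟨ha, ?_⟩
    have : (∑ i, a i • x i) = 0 := by
      simp [ha]
    rw [this, zero_add] at heq
    exact heq
  · -- projectivity
    intro hL
    -- g is A-linear
    have guniq : ∀ (i : Fin r) (u : L) (a : A), φ a = σ u (f i) →
        (hfA i u).choose = a := by
      intro i u a hau
      exact hφ (by rw [hg, hau])
    set g : Fin r → L → A := fun i u => (hfA i u).choose with hgdef
    have gadd : ∀ i u v, g i (u + v) = g i u + g i v := by
      intro i u v
      exact guniq i (u + v) _ (by rw [map_add, hg, hg, haddx])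
    have gsmul : ∀ (i) (a : A) (u), g i (a • u) = a * g i u := by
      intro i a u
      exact guniq i (a • u) _ (by rw [map_mul, hg, hA])
    -- retraction
    set C : Submodule A L :=
      { carrier := {y | ∀ i, σ y (f i) = 0}
        add_mem' := fun hy hz i => by rw [haddx, hy i, hz i, add_zero]
        zero_mem' := fun i => hzero _
        smul_mem' := fun a y hy i => by rw [hA, hy i, mul_zero] } with hCdef
    have hmemπ : ∀ u : L, (u - ∑ i, g i u • x i) ∈ C := by
      intro u j
      rw [hsub, hsum]
      have : ∀ i, σ (g i u • x i) (f j) = if i = j then φ (g i u) else 0 := by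
        intro i
        rw [hA, hδ]
        split <;> simp
      rw [Finset.sum_congr rfl fun i _ => this i, Finset.sum_ite_eq' Finset.univ j]
      simp [hg j u, hgdef]
    let π : L →ₗ[A] C :=
      { toFun := fun u => ⟨u - ∑ i, g i u • x i, hmemπ u⟩
        map_add' := by
          intro u v
          apply Subtype.ext
          simp only [Submodule.coe_add]
          have : ∀ i, g i (u + v) • x i = g i u • x i + g i v • x i := by
            intro i; rw [gadd, add_smul]
          rw [Finset.sum_congr rfl fun i _ => this i, Finset.sum_add_distrib]
          abel
        map_smul' := by
          intro a u
          apply Subtype.ext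
          simp only [RingHom.id_apply, SetLike.mk_smul_mk]
          have : ∀ i, g i (a • u) • x i = a • (g i u • x i) := by
            intro i; rw [gsmul, mul_smul]
          rw [Finset.sum_congr rfl fun i _ => this i, ← Finset.smul_sum, ← smul_sub] }
    have hsplit : π.comp C.subtype = LinearMap.id := by
      ext c
      have hgc : ∀ i, g i (c : L) = 0 := by
        intro i
        apply hφ
        rw [hg, map_zero]
        exact c.2 i
      simp [π, hgc]
    exact Module.Projective.of_split C.subtype π hsplit
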